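/- Let A ∈ ℂ^{n×n} have circulant decomposition A = Σ_{k=0}^{n−1} R_k D^k, and let W be the unitary DFT matrix W(p,q) = (1/√n) e^{−2πipq/n}. Then for every k, R_k D^k = W^* ((W A W^*) ∘ C^k) W, where ∘ is the entrywise (Hadamard) product; that is, each circulant component of A is the inverse 2D Fourier transform of the corresponding cycle of the 2D Fourier transform W A W^* of A. -/

import Mathlib

open Matrix Finset

/-- `ω = exp(2πi/n)`. -/
noncomputable def omegaC (n : ℕ) : ℂ := Complex.exp (2 * Real.pi * Complex.I / n)

/-- The `n × n` cyclic-shift permutation matrix `C`, with `C(i,j) = 1` iff `i ≡ j + 1 (mod n)`. -/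
def cycMat (n : ℕ) : Matrix (Fin n) (Fin n) ℂ :=
  Matrix.of fun i j => if (i : ℕ) = ((j : ℕ) + 1) % n then 1 else 0

/-- The diagonal phase matrix `D` with `D(q,q) = ω^q`. -/
noncomputable def phaseMat (n : ℕ) : Matrix (Fin n) (Fin n) ℂ :=
  Matrix.diagonal fun q => omegaC n ^ (q : ℕ)

/-- The unitary DFT matrix `W(p,q) = (1/√n) e^{-2πipq/n}`. -/
noncomputable def dftMat (n : ℕ) : Matrix (Fin n) (Fin n) ℂ :=
  Matrix.of fun p q => (1 / (Real.sqrt n : ℂ)) * omegaC n ^ (-((p : ℕ) * (q : ℕ) : ℤ))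

/-- The coefficients `r_{j,k} = (1/n) Σ_l ω^{-kl} A((l+j) mod n, l)`. -/
noncomputable def circCoef {n : ℕ} (A : Matrix (Fin n) (Fin n) ℂ) (j k : Fin n) : ℂ :=
  (1 / (n : ℂ)) * ∑ l : Fin n, omegaC n ^ (-((k : ℕ) * (l : ℕ) : ℤ)) * A (l + j) l

/-- The `k`-th circulant component `R_k = Σ_j r_{j,k} C^j` of `A`. -/
noncomputable def circComp {n : ℕ} (A : Matrix (Fin n) (Fin n) ℂ) (k : Fin n) :
    Matrix (Fin n) (Fin n) ℂ :=
  ∑ j : Fin n, circCoef A j k • cycMat n ^ (j : ℕ)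

lemma omegaC_ne_zero (n : ℕ) : omegaC n ≠ 0 := Complex.exp_ne_zero _

lemma omegaC_prim {n : ℕ} (hn : 0 < n) : IsPrimitiveRoot (omegaC n) n := by
  simpa [omegaC] using Complex.isPrimitiveRoot_exp n hn.ne'

lemma omegaC_pow_n {n : ℕ} (hn : 0 < n) : omegaC n ^ (n : ℤ) = 1 := by
  have := (omegaC_prim hn).pow_eq_one
  exact_mod_cast this

lemma omegaC_congr {n : ℕ} (hn : 0 < n) {a b : ℤ} (h : (n:ℤ) ∣ (a - b)) :
    omegaC n ^ a = omegaC n ^ b := by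
  obtain ⟨c, hc⟩ := h
  have ha : a = b + (n:ℤ) * c := by linarith
  rw [ha, zpow_add₀ (omegaC_ne_zero n), _root_.zpow_mul, omegaC_pow_n hn, _root_.one_zpow, mul_one]

lemma omegaC_ortho {n : ℕ} (hn : 0 < n) (m : ℤ) :
    ∑ t : Fin n, omegaC n ^ ((t : ℕ) * m) = if (n:ℤ) ∣ m then (n:ℂ) else 0 := by
  have hω := omegaC_ne_zero n
  have hpow : ∀ t : Fin n, omegaC n ^ (((t : ℕ) : ℤ) * m) = (omegaC n ^ m) ^ (t : ℕ) := by
    intro t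
    rw [mul_comm, _root_.zpow_mul, zpow_natCast]
  simp only [hpow]
  rw [Fin.sum_univ_eq_sum_range (fun i => (omegaC n ^ m) ^ i)]
  by_cases h : (n:ℤ) ∣ m
  · have h1 : omegaC n ^ m = 1 := ((omegaC_prim hn).zpow_eq_one_iff_dvd m).mpr h
    simp [h, h1]
  · have h1 : omegaC n ^ m ≠ 1 := fun hc => h (((omegaC_prim hn).zpow_eq_one_iff_dvd m).mp hc)
    rw [geom_sum_eq h1]
    have h2 : (omegaC n ^ m) ^ n = 1 := by
      rw [← zpow_natCast, ← _root_.zpow_mul, mul_comm, _root_.zpow_mul, omegaC_pow_n hn, _root_.one_zpow]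
    simp [h2, h]

lemma omegaC_star (n : ℕ) : star (omegaC n) = (omegaC n)⁻¹ := by
  rw [show (star (omegaC n) : ℂ) = (starRingEnd ℂ) (omegaC n) from rfl, omegaC,
    ← Complex.exp_conj, ← Complex.exp_neg]
  congr 1
  simp [map_div₀, Complex.conj_I, map_ofNat]
  ring_nf

lemma omegaC_star_zpow (n : ℕ) (m : ℤ) : star (omegaC n ^ m) = omegaC n ^ (-m) := by
  rw [show star (omegaC n ^ m) = (starRingEnd ℂ) (omegaC n ^ m) from rfl, map_zpow₀,
    show (starRingEnd ℂ) (omegaC n) = star (omegaC n) from rfl, omegaC_star, _root_.inv_zpow, ← _root_.zpow_neg]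

lemma dft_conj_apply (n : ℕ) (p q : Fin n) :
    (dftMat n)ᴴ p q = (1 / (Real.sqrt n : ℂ)) * omegaC n ^ (((p : ℕ) * (q : ℕ) : ℤ)) := by
  simp only [conjTranspose_apply, dftMat, of_apply, star_mul', omegaC_star_zpow, neg_neg]
  rw [mul_comm ((q:ℕ) : ℤ)]
  congr 1
  simp [← Complex.ofReal_one, ← Complex.ofReal_div, Complex.conj_ofReal]

lemma sqrt_mul_self (n : ℕ) :
    (1 / (Real.sqrt n : ℂ)) * (1 / (Real.sqrt n : ℂ)) = 1 / (n : ℂ) := by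
  rw [div_mul_div_comm, one_mul, ← Complex.ofReal_mul, Real.mul_self_sqrt (Nat.cast_nonneg n)]
  norm_num

lemma cycMat_apply {n : ℕ} [NeZero n] (i j : Fin n) :
    cycMat n i j = if i = j + 1 then 1 else 0 := by
  have h : ((i : ℕ) = ((j : ℕ) + 1) % n) ↔ i = j + 1 := by
    rw [Fin.ext_iff, Fin.val_add, Fin.val_one', Nat.add_mod, Nat.mod_eq_of_lt j.isLt]
  simp only [cycMat, of_apply, h]

open Fin.NatCast Fin.CommRing in
lemma cycMat_pow {n : ℕ} [NeZero n] (m : ℕ) (i j : Fin n) :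
    (cycMat n ^ m) i j = if i = j + (m : Fin n) then 1 else 0 := by
  induction m generalizing i j with
  | zero => simp [Matrix.one_apply]
  | succ m ih =>
    rw [pow_succ, Matrix.mul_apply]
    rw [Finset.sum_eq_single (j + 1)]
    · rw [ih, cycMat_apply, if_pos rfl, mul_one]
      have : j + 1 + (m : Fin n) = j + ((m:ℕ)+1 : ℕ) := by
        push_cast
        ring
      rw [this]
    · intro b _ hb
      rw [cycMat_apply, if_neg (fun hc => hb hc), mul_zero]
    · intro h
      exact absurd (Finset.mem_univ _) h

open Fin.NatCast in
lemma circompPhase_apply {n : ℕ} [NeZero n] (A : Matrix (Fin n) (Fin n) ℂ) (k s t : Fin n) :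
    (circComp A k * phaseMat n ^ (k:ℕ)) s t
      = circCoef A (s - t) k * omegaC n ^ ((t : ℕ) * (k : ℕ)) := by
  rw [phaseMat, Matrix.diagonal_pow, Matrix.mul_diagonal]
  congr 1
  · rw [circComp, Matrix.sum_apply]
    simp only [Matrix.smul_apply, cycMat_pow, Fin.cast_val_eq_self, smul_eq_mul, mul_ite,
      mul_one, mul_zero]
    have hcond : ∀ jj : Fin n, (s = t + jj) ↔ (s - t = jj) := by
      intro jj; constructor
      · intro h; rw [h]; abel
      · intro h; rw [← h]; abel
    simp only [hcond]
    rw [Finset.sum_ite_eq Finset.univ (s - t) (fun jj => circCoef A jj k)]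
    simp
  · rw [Pi.pow_apply, ← pow_mul]

lemma fin_val_add_dvd {n : ℕ} [NeZero n] (a b : Fin n) :
    (n:ℤ) ∣ (((a:ℕ):ℤ) + ((b:ℕ):ℤ) - (((a+b : Fin n):ℕ):ℤ)) := by
  refine ⟨(((a:ℕ) + (b:ℕ))/n : ℕ), ?_⟩
  have h := Nat.mod_add_div ((a:ℕ) + (b:ℕ)) n
  have h2 : ((a+b : Fin n):ℕ) = ((a:ℕ) + (b:ℕ)) % n := Fin.val_add a b
  rw [h2]
  have h' : ((((a:ℕ) + (b:ℕ)) % n : ℕ):ℤ) + (n:ℤ) * ((((a:ℕ) + (b:ℕ))/n : ℕ):ℤ)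
      = ((a:ℕ):ℤ) + ((b:ℕ):ℤ) := by exact_mod_cast h
  linarith

lemma fin_val_sub_dvd {n : ℕ} [NeZero n] (a b : Fin n) :
    (n:ℤ) ∣ ((((a-b : Fin n):ℕ):ℤ) - (((a:ℕ):ℤ) - ((b:ℕ):ℤ))) := by
  have h := fin_val_add_dvd (a-b) b
  rw [sub_add_cancel] at h
  obtain ⟨c, hc⟩ := h
  exact ⟨c, by linarith⟩

lemma fin_eq_iff_dvd {n : ℕ} [NeZero n] (a b : Fin n) :
    (n:ℤ) ∣ (((a:ℕ):ℤ) - ((b:ℕ):ℤ)) ↔ a = b := by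
  constructor
  · intro h
    have ha := a.isLt
    have hb := b.isLt
    have hz : (((a:ℕ):ℤ) - ((b:ℕ):ℤ)) = 0 := by
      refine Int.eq_zero_of_abs_lt_dvd h ?_
      rw [abs_lt]
      constructor <;> [push_cast; push_cast] <;> omega
    have : (a:ℕ) = (b:ℕ) := by omega
    exact Fin.ext this
  · rintro rfl; simp

lemma fin_eq_add_iff_dvd {n : ℕ} [NeZero n] (p q k : Fin n) :
    p = q + k ↔ (n:ℤ) ∣ (((q:ℕ):ℤ) + ((k:ℕ):ℤ) - ((p:ℕ):ℤ)) := by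
  rw [eq_comm, ← fin_eq_iff_dvd (q+k) p]
  obtain ⟨c, hc⟩ := fin_val_add_dvd q k
  constructor
  · rintro ⟨d, hd⟩; exact ⟨c + d, by linarith⟩
  · rintro ⟨d, hd⟩; exact ⟨d - c, by push_cast; push_cast at hd hc; linarith⟩

lemma dft_mul_conj {n : ℕ} (hn : 0 < n) : dftMat n * (dftMat n)ᴴ = 1 := by
  haveI : NeZero n := ⟨hn.ne'⟩
  have hω := omegaC_ne_zero n
  have hnc : (n : ℂ) ≠ 0 := Nat.cast_ne_zero.mpr hn.ne'
  ext p q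
  rw [Matrix.mul_apply]
  have hterm : ∀ s : Fin n,
      dftMat n p s * (dftMat n)ᴴ s q
        = (1/(n:ℂ)) * omegaC n ^ (((s:ℕ):ℤ) * (((q:ℕ):ℤ) - ((p:ℕ):ℤ))) := by
    intro s
    rw [dft_conj_apply, dftMat]
    simp only [of_apply]
    rw [show (1 / (Real.sqrt n : ℂ)) * omegaC n ^ (-(((p:ℕ):ℤ) * ((s:ℕ):ℤ))) *
        ((1 / (Real.sqrt n : ℂ)) * omegaC n ^ (((s:ℕ):ℤ) * ((q:ℕ):ℤ)))
        = ((1 / (Real.sqrt n : ℂ)) * (1 / (Real.sqrt n : ℂ))) *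
          (omegaC n ^ (-(((p:ℕ):ℤ) * ((s:ℕ):ℤ))) * omegaC n ^ (((s:ℕ):ℤ) * ((q:ℕ):ℤ))) from by
      ring, sqrt_mul_self, ← zpow_add₀ hω]
    congr 1
    ring
  rw [Finset.sum_congr rfl (fun s _ => hterm s), ← Finset.mul_sum,
    omegaC_ortho hn (((q:ℕ):ℤ) - ((p:ℕ):ℤ)), Matrix.one_apply]
  by_cases h : (n:ℤ) ∣ (((q:ℕ):ℤ) - ((p:ℕ):ℤ))
  · rw [if_pos h, if_pos (((fin_eq_iff_dvd q p).mp h).symm)]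
    field_simp
  · rw [if_neg h, if_neg (fun hc => h ((fin_eq_iff_dvd q p).mpr (by rw [hc])))]
    ring

lemma conj_mul_dft {n : ℕ} (hn : 0 < n) : (dftMat n)ᴴ * dftMat n = 1 :=
  mul_eq_one_comm.mp (dft_mul_conj hn)

open Fin.NatCast in
lemma main_conj {n : ℕ} (hn : 0 < n) (A : Matrix (Fin n) (Fin n) ℂ) (k p q : Fin n) :
    (dftMat n * (circComp A k * phaseMat n ^ (k : ℕ)) * (dftMat n)ᴴ) p q =
      Matrix.hadamard (dftMat n * A * (dftMat n)ᴴ) (cycMat n ^ (k : ℕ)) p q := by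
  haveI : NeZero n := ⟨hn.ne'⟩
  have hω := omegaC_ne_zero n
  have hnc : (n : ℂ) ≠ 0 := Nat.cast_ne_zero.mpr hn.ne'
  set c : ℂ := (1 / (Real.sqrt n : ℂ)) with hc
  set D : ℤ := ((q:ℕ):ℤ) + ((k:ℕ):ℤ) - ((p:ℕ):ℤ) with hD
  set T : ℂ := ∑ u : Fin n, ∑ l : Fin n,
      omegaC n ^ (-(((p:ℕ):ℤ) * ((u:ℕ):ℤ)) - ((k:ℕ):ℤ) * ((l:ℕ):ℤ)) * A (l + u) l with hT
  -- the inner sum over s, for fixed t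
  have hsum : ∀ t : Fin n,
      (∑ s : Fin n, dftMat n p s * (circComp A k * phaseMat n ^ (k : ℕ)) s t)
        = c * omegaC n ^ (((t:ℕ):ℤ) * (((k:ℕ):ℤ) - ((p:ℕ):ℤ))) * ((1/(n:ℂ)) * T) := by
    intro t
    have step1 : ∀ s : Fin n, dftMat n p s * (circComp A k * phaseMat n ^ (k : ℕ)) s t
        = c * omegaC n ^ (-(((p:ℕ):ℤ) * ((s:ℕ):ℤ)))
            * (circCoef A (s - t) k * omegaC n ^ (((t:ℕ):ℤ) * ((k:ℕ):ℤ))) := by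
      intro s
      rw [circompPhase_apply, dftMat]
      simp only [of_apply]
      rw [← zpow_natCast (omegaC n) ((t:ℕ) * (k:ℕ)), Nat.cast_mul]
    rw [Finset.sum_congr rfl fun s _ => step1 s]
    rw [← Equiv.sum_comp (Equiv.addRight t) (fun s => c * omegaC n ^ (-(((p:ℕ):ℤ) * ((s:ℕ):ℤ)))
            * (circCoef A (s - t) k * omegaC n ^ (((t:ℕ):ℤ) * ((k:ℕ):ℤ))))]
    simp only [Equiv.coe_addRight]
    have step2 : ∀ u : Fin n,
        c * omegaC n ^ (-(((p:ℕ):ℤ) * (((u + t : Fin n):ℕ):ℤ)))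
            * (circCoef A (u + t - t) k * omegaC n ^ (((t:ℕ):ℤ) * ((k:ℕ):ℤ)))
          = (c * (1/(n:ℂ))) * omegaC n ^ (((t:ℕ):ℤ) * (((k:ℕ):ℤ) - ((p:ℕ):ℤ)))
            * (∑ l : Fin n,
                omegaC n ^ (-(((p:ℕ):ℤ) * ((u:ℕ):ℤ)) - ((k:ℕ):ℤ) * ((l:ℕ):ℤ)) * A (l + u) l) := by
      intro u
      rw [add_sub_cancel_right]
      have hval : omegaC n ^ (-(((p:ℕ):ℤ) * (((u + t : Fin n):ℕ):ℤ)))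
          = omegaC n ^ (-(((p:ℕ):ℤ) * ((u:ℕ):ℤ)) - ((p:ℕ):ℤ) * ((t:ℕ):ℤ)) := by
        obtain ⟨c3, hc3⟩ := fin_val_add_dvd u t
        refine omegaC_congr hn ⟨((p:ℕ):ℤ) * c3, ?_⟩
        linear_combination (((p:ℕ):ℤ)) * hc3
      rw [hval, circCoef, Finset.mul_sum, Finset.sum_mul, Finset.mul_sum, Finset.mul_sum]
      refine Finset.sum_congr rfl fun l _ => ?_
      have hexp : omegaC n ^ (-(((p:ℕ):ℤ) * ((u:ℕ):ℤ)) - ((p:ℕ):ℤ) * ((t:ℕ):ℤ))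
            * omegaC n ^ (-(((k:ℕ):ℤ) * ((l:ℕ):ℤ)))
            * omegaC n ^ (((t:ℕ):ℤ) * ((k:ℕ):ℤ))
          = omegaC n ^ (((t:ℕ):ℤ) * (((k:ℕ):ℤ) - ((p:ℕ):ℤ)))
            * omegaC n ^ (-(((p:ℕ):ℤ) * ((u:ℕ):ℤ)) - ((k:ℕ):ℤ) * ((l:ℕ):ℤ)) := by
        rw [← zpow_add₀ hω, ← zpow_add₀ hω, ← zpow_add₀ hω]
        congr 1
        ring
      linear_combination (c * (1/(n:ℂ)) * A (l + u) l) * hexp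
    rw [Finset.sum_congr rfl fun u _ => step2 u, ← Finset.mul_sum, hT]
    ring
  -- left hand side
  have hL : (dftMat n * (circComp A k * phaseMat n ^ (k : ℕ)) * (dftMat n)ᴴ) p q
      = (1/(n:ℂ) * (1/(n:ℂ))) * ((∑ t : Fin n, omegaC n ^ (((t:ℕ):ℤ) * D)) * T) := by
    rw [Matrix.mul_apply]
    have hterm : ∀ t : Fin n,
        (dftMat n * (circComp A k * phaseMat n ^ (k : ℕ))) p t
            * (dftMat n)ᴴ t q
          = (1/(n:ℂ) * (1/(n:ℂ))) * (omegaC n ^ (((t:ℕ):ℤ) * D) * T) := by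
      intro t
      rw [Matrix.mul_apply, hsum t, dft_conj_apply]
      have hexp : omegaC n ^ (((t:ℕ):ℤ) * (((k:ℕ):ℤ) - ((p:ℕ):ℤ)))
            * omegaC n ^ (((t:ℕ):ℤ) * ((q:ℕ):ℤ))
          = omegaC n ^ (((t:ℕ):ℤ) * D) := by
        rw [← zpow_add₀ hω]
        congr 1
        rw [hD]; ring
      have hcc : c * c = 1/(n:ℂ) := sqrt_mul_self n
      calc c * omegaC n ^ (((t:ℕ):ℤ) * (((k:ℕ):ℤ) - ((p:ℕ):ℤ))) * (1/(n:ℂ) * T)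
            * (c * omegaC n ^ (((t:ℕ):ℤ) * ((q:ℕ):ℤ)))
          = (c * c) * (1/(n:ℂ)) * (omegaC n ^ (((t:ℕ):ℤ) * (((k:ℕ):ℤ) - ((p:ℕ):ℤ)))
              * omegaC n ^ (((t:ℕ):ℤ) * ((q:ℕ):ℤ))) * T := by ring
        _ = (1/(n:ℂ) * (1/(n:ℂ))) * (omegaC n ^ (((t:ℕ):ℤ) * D) * T) := by
            rw [hexp, hcc]; ring
    rw [Finset.sum_congr rfl fun t _ => hterm t, ← Finset.mul_sum, ← Finset.sum_mul]
  -- right hand side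
  have hB : (dftMat n * A * (dftMat n)ᴴ) p q
      = (1/(n:ℂ)) * ∑ t : Fin n, ∑ s : Fin n,
          omegaC n ^ (-(((p:ℕ):ℤ) * ((s:ℕ):ℤ)) + ((t:ℕ):ℤ) * ((q:ℕ):ℤ)) * A s t := by
    rw [Matrix.mul_apply, Finset.mul_sum]
    refine Finset.sum_congr rfl fun t _ => ?_
    rw [Matrix.mul_apply, dft_conj_apply, Finset.sum_mul, Finset.mul_sum]
    refine Finset.sum_congr rfl fun s _ => ?_
    rw [dftMat]
    simp only [of_apply]
    have hcc : c * c = 1/(n:ℂ) := sqrt_mul_self n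
    have hexp : omegaC n ^ (-(((p:ℕ):ℤ) * ((s:ℕ):ℤ))) * omegaC n ^ (((t:ℕ):ℤ) * ((q:ℕ):ℤ))
        = omegaC n ^ (-(((p:ℕ):ℤ) * ((s:ℕ):ℤ)) + ((t:ℕ):ℤ) * ((q:ℕ):ℤ)) := by
      rw [← zpow_add₀ hω]
    calc c * omegaC n ^ (-(((p:ℕ):ℤ) * ((s:ℕ):ℤ))) * A s t
          * (c * omegaC n ^ (((t:ℕ):ℤ) * ((q:ℕ):ℤ)))
        = (c * c) * (omegaC n ^ (-(((p:ℕ):ℤ) * ((s:ℕ):ℤ)))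
            * omegaC n ^ (((t:ℕ):ℤ) * ((q:ℕ):ℤ))) * A s t := by ring
      _ = _ := by rw [hexp, hcc]; ring
  rw [hL, Matrix.hadamard_apply, cycMat_pow, Fin.cast_val_eq_self, omegaC_ortho hn D]
  by_cases h : (n:ℤ) ∣ D
  · rw [if_pos h, if_pos ((fin_eq_add_iff_dvd p q k).mpr h), hB, mul_one]
    -- show T equals the B double sum, given h
    have hTB : T = ∑ t : Fin n, ∑ s : Fin n,
        omegaC n ^ (-(((p:ℕ):ℤ) * ((s:ℕ):ℤ)) + ((t:ℕ):ℤ) * ((q:ℕ):ℤ)) * A s t := by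
      rw [hT, Finset.sum_comm]
      refine Finset.sum_congr rfl fun l _ => ?_
      rw [← Equiv.sum_comp (Equiv.subRight l) (fun u =>
        omegaC n ^ (-(((p:ℕ):ℤ) * ((u:ℕ):ℤ)) - ((k:ℕ):ℤ) * ((l:ℕ):ℤ)) * A (l + u) l)]
      simp only [Equiv.subRight_apply]
      refine Finset.sum_congr rfl fun s _ => ?_
      have hfix : l + (s - l) = s := by abel
      rw [hfix]
      congr 1
      obtain ⟨c1, hc1⟩ := fin_val_sub_dvd s l
      obtain ⟨c2, hc2⟩ := h
      refine omegaC_congr hn ⟨-((p:ℕ):ℤ) * c1 - ((l:ℕ):ℤ) * c2, ?_⟩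
      rw [hD] at hc2
      linear_combination (-((p:ℕ):ℤ)) * hc1 - (((l:ℕ):ℤ)) * hc2
    rw [hTB]
    field_simp
  · rw [if_neg h, if_neg (fun hc => h ((fin_eq_add_iff_dvd p q k).mp hc)), mul_zero]
    ring

/-- Each circulant component `R_k D^k` of `A` is the inverse 2D Fourier transform of the
corresponding cycle of the 2D Fourier transform `W A W^*` of `A`:
`R_k D^k = W^* ((W A W^*) ∘ C^k) W`. -/
theorem circComp_eq_inverse_fourier_of_cycle (n : ℕ) (hn : 0 < n)
    (A : Matrix (Fin n) (Fin n) ℂ) (k : Fin n) :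
    circComp A k * phaseMat n ^ (k : ℕ) =
      (dftMat n)ᴴ *
        Matrix.hadamard (dftMat n * A * (dftMat n)ᴴ) (cycMat n ^ (k : ℕ)) *
        dftMat n := by
  have hmain : dftMat n * (circComp A k * phaseMat n ^ (k : ℕ)) * (dftMat n)ᴴ
      = Matrix.hadamard (dftMat n * A * (dftMat n)ᴴ) (cycMat n ^ (k : ℕ)) := by
    ext p q
    exact main_conj hn A k p q
  rw [← hmain]
  have h2 : (dftMat n)ᴴ * dftMat n = 1 := conj_mul_dft hn
  calc circComp A k * phaseMat n ^ (k : ℕ)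
      = ((dftMat n)ᴴ * dftMat n) * (circComp A k * phaseMat n ^ (k : ℕ))
        * ((dftMat n)ᴴ * dftMat n) := by rw [h2, one_mul, mul_one]
    _ = _ := by simp only [Matrix.mul_assoc]
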